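/- Let $\mu \in (0,1)$, $\alpha \geq -1$, and $a_0 = 1$, $a_n = e^{-n(n+1)/2}$ for $n \geq 1$. Let $g(x) = x^{\alpha/2} \mu^{-(\alpha+2)/2} e^{-it \log_\mu x}$ for fixed $t \in \mathbb{R}$, and $g_n = g \cdot \chi_{[a_n, a_{n-1}]}$. Then, with the weighted norm $\|f\|^2 = \int_0^\infty |f(x)|^2 x^{-(\alpha+1)} dx$, one has $\|g_n\|^2 = \mu^{-(\alpha+2)} n$, the functions $g_n$ are pairwise orthogonal, and for $\widehat{C}f(x) = \mu^{-1} f(x/\mu)$ and $\lambda = \mu^{-(\alpha+2)/2}e^{it}$, for all $n > \ln(1/\mu)$ one has $\|(\widehat{C} - \lambda) g_n\|^2 = -2|\lambda|^2 \mu^{-(\alpha+2)} \ln \mu$. In particular $\|(\widehat{C} - \lambda) g_n\|/\|g_n\| \to 0$ as $n \to \infty$. -/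

import Mathlib

open Complex MeasureTheory Filter

/-- `a 0 = 1`, `a n = e^(-n(n+1)/2)`. -/
noncomputable def aSeq (n : ℕ) : ℝ := Real.exp (-((n : ℝ) * ((n : ℝ) + 1) / 2))

/-- `g(x) = x^(α/2) μ^(-(α+2)/2) e^(-i t log_μ x)`. -/
noncomputable def gEig (μ α t : ℝ) (x : ℝ) : ℂ :=
  ((x ^ (α / 2) * μ ^ (-(α + 2) / 2) : ℝ) : ℂ) *
    Complex.exp (-Complex.I * (t : ℂ) * ((Real.log x / Real.log μ : ℝ) : ℂ))

/-- `g_n = g · χ_[a_n, a_(n-1)]`. -/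
noncomputable def gSeq (μ α t : ℝ) (n : ℕ) : ℝ → ℂ :=
  Set.indicator (Set.Icc (aSeq n) (aSeq (n - 1))) (gEig μ α t)

lemma aSeq_pos (n : ℕ) : 0 < aSeq n := Real.exp_pos _

lemma aSeq_anti {m n : ℕ} (h : m ≤ n) : aSeq n ≤ aSeq m := by
  unfold aSeq
  apply Real.exp_le_exp.mpr
  have h1 : (m:ℝ) ≤ n := Nat.cast_le.mpr h
  have h2 : (0:ℝ) ≤ m := Nat.cast_nonneg m
  nlinarith

lemma aSeq_ratio {n : ℕ} (hn : 1 ≤ n) : Real.log (aSeq (n-1) / aSeq n) = n := by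
  unfold aSeq
  rw [← Real.exp_sub, Real.log_exp, Nat.cast_sub hn, Nat.cast_one]
  ring

lemma abs_gEig {μ α t x : ℝ} (hx : 0 ≤ x) (hμ : 0 ≤ μ) :
    ‖gEig μ α t x‖ = x ^ (α/2) * μ ^ (-(α+2)/2) := by
  unfold gEig
  rw [norm_mul, Complex.norm_real, Real.norm_eq_abs, Complex.norm_exp]
  have h1 : (-Complex.I * (t:ℂ) * ((Real.log x / Real.log μ : ℝ):ℂ)).re = 0 := by
    simp
  rw [h1, Real.exp_zero, mul_one]
  exact abs_of_nonneg (by positivity)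

lemma rpow_half_sq {μ r : ℝ} (hμ : 0 ≤ μ) : (μ ^ (r/2)) ^ 2 = μ ^ r := by
  rw [← Real.rpow_natCast (μ ^ (r/2)) 2, ← Real.rpow_mul hμ]
  norm_num

lemma gEig_sq {μ α t x : ℝ} (hx : 0 < x) (hμ : 0 < μ) :
    ‖gEig μ α t x‖ ^ 2 * x ^ (-(α+1)) = μ ^ (-(α+2)) * x⁻¹ := by
  rw [abs_gEig hx.le hμ.le, mul_pow, rpow_half_sq hx.le, rpow_half_sq hμ.le,
      mul_right_comm, ← Real.rpow_add hx]
  have e3 : α + -(α+1) = -1 := by ring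
  rw [e3, Real.rpow_neg_one]
  ring

lemma int_inv (c : ℝ) {p q : ℝ} (hp : 0 < p) (hpq : p ≤ q) :
    ∫ x in Set.Ioc p q, c * x⁻¹ = c * Real.log (q / p) := by
  rw [← intervalIntegral.integral_of_le hpq, intervalIntegral.integral_const_mul,
      integral_inv_of_pos hp (hp.trans_le hpq)]

lemma abs_lam {μ α t : ℝ} (hμ0 : 0 < μ) :
    ‖((μ ^ (-(α + 2) / 2) : ℝ) : ℂ) * Complex.exp (Complex.I * (t : ℂ))‖
      = μ ^ (-(α+2)/2) := by
  rw [norm_mul, Complex.norm_real, Real.norm_eq_abs, Complex.norm_exp]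
  have h1 : (Complex.I * (t:ℂ)).re = 0 := by simp
  rw [h1, Real.exp_zero, mul_one]
  exact abs_of_nonneg (Real.rpow_nonneg hμ0.le _)

lemma eig {μ α t x : ℝ} (hμ0 : 0 < μ) (hμ1 : μ < 1) (hx : 0 < x) :
    (μ:ℂ)⁻¹ * gEig μ α t (x/μ) =
      ((μ ^ (-(α+2)/2) : ℝ) : ℂ) * Complex.exp (Complex.I * (t:ℂ)) * gEig μ α t x := by
  have hlogμ : Real.log μ ≠ 0 := ne_of_lt (Real.log_neg hμ0 hμ1)
  have hxμ : 0 < x / μ := div_pos hx hμ0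
  have harg : Real.log (x/μ) / Real.log μ = Real.log x / Real.log μ - 1 := by
    rw [Real.log_div hx.ne' hμ0.ne']
    field_simp
  have hcoef : μ⁻¹ * ((x/μ) ^ (α/2) * μ ^ (-(α+2)/2))
      = μ ^ (-(α+2)/2) * (x ^ (α/2) * μ ^ (-(α+2)/2)) := by
    have hinv : μ⁻¹ = Real.exp (-(Real.log μ)) := by
      rw [Real.exp_neg, Real.exp_log hμ0]
    rw [Real.rpow_def_of_pos hx, Real.rpow_def_of_pos hμ0, Real.rpow_def_of_pos hxμ,
        hinv, Real.log_div hx.ne' hμ0.ne', ← Real.exp_add, ← Real.exp_add, ← Real.exp_add,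
        ← Real.exp_add]
    congr 1
    ring
  have hcoefC : (μ:ℂ)⁻¹ * ((((x/μ) ^ (α/2) * μ ^ (-(α+2)/2) : ℝ)):ℂ)
      = ((μ ^ (-(α+2)/2) : ℝ):ℂ) * (((x ^ (α/2) * μ ^ (-(α+2)/2) : ℝ)):ℂ) := by
    exact_mod_cast hcoef
  have hexp : Complex.exp (-Complex.I * (t:ℂ) * ((Real.log (x/μ) / Real.log μ : ℝ):ℂ)) =
      Complex.exp (Complex.I * (t:ℂ)) *
        Complex.exp (-Complex.I * (t:ℂ) * ((Real.log x / Real.log μ : ℝ):ℂ)) := by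
    rw [← Complex.exp_add, harg]
    congr 1
    push_cast
    ring
  unfold gEig
  rw [hexp]
  linear_combination
    (Complex.exp (Complex.I * (t:ℂ)) *
      Complex.exp (-Complex.I * (t:ℂ) * ((Real.log x / Real.log μ : ℝ):ℂ))) * hcoefC

lemma abs_lam_g_sq {μ α t x : ℝ} (hμ0 : 0 < μ) (hx : 0 < x) :
    ‖((μ ^ (-(α+2)/2) : ℝ):ℂ) * Complex.exp (Complex.I * (t:ℂ)) * gEig μ α t x‖ ^ 2
        * x ^ (-(α+1))
      = μ ^ (-(α+2)) * μ ^ (-(α+2)) * x⁻¹ := by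
  rw [norm_mul, abs_lam hμ0, mul_pow, mul_assoc, gEig_sq hx hμ0, rpow_half_sq hμ0.le]
  ring

lemma aSeq_lt {μ : ℝ} (hμ0 : 0 < μ) {n : ℕ} (hn : 1 ≤ n) (hn' : Real.log (1/μ) < n) :
    aSeq n < μ * aSeq (n-1) := by
  have h1 : aSeq n = Real.exp (-(n:ℝ)) * aSeq (n-1) := by
    unfold aSeq
    rw [← Real.exp_add, Nat.cast_sub hn, Nat.cast_one]
    congr 1
    ring
  have h2 : Real.exp (-(n:ℝ)) < μ := by
    have h3 : -(n:ℝ) < Real.log μ := by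
      rw [one_div, Real.log_inv] at hn'
      linarith
    calc Real.exp (-(n:ℝ)) < Real.exp (Real.log μ) := Real.exp_lt_exp.mpr h3
      _ = μ := Real.exp_log hμ0
  rw [h1]
  exact mul_lt_mul_of_pos_right h2 (aSeq_pos _)

lemma part1 {μ : ℝ} (α t : ℝ) (hμ0 : 0 < μ) (hμ1 : μ < 1) {n : ℕ} (hn : 1 ≤ n) :
    (∫ x in Set.Ioi (0:ℝ), ‖gSeq μ α t n x‖ ^ 2 * x ^ (-(α + 1)))
      = μ ^ (-(α + 2)) * n := by
  have hsub : Set.Icc (aSeq n) (aSeq (n-1)) ⊆ Set.Ioi (0:ℝ) :=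
    fun x hx => lt_of_lt_of_le (aSeq_pos n) hx.1
  have hcong : ∀ x ∈ Set.Ioi (0:ℝ),
      ‖gSeq μ α t n x‖ ^ 2 * x ^ (-(α + 1)) =
      (Set.Icc (aSeq n) (aSeq (n-1))).indicator (fun x => μ ^ (-(α+2)) * x⁻¹) x := by
    intro x hx
    by_cases hmem : x ∈ Set.Icc (aSeq n) (aSeq (n-1))
    · rw [Set.indicator_of_mem hmem]
      unfold gSeq
      rw [Set.indicator_of_mem hmem]
      exact gEig_sq hx hμ0
    · rw [Set.indicator_of_notMem hmem]
      unfold gSeq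
      rw [Set.indicator_of_notMem hmem]
      simp
  rw [setIntegral_congr_fun measurableSet_Ioi hcong,
      setIntegral_indicator measurableSet_Icc, Set.inter_eq_right.mpr hsub,
      integral_Icc_eq_integral_Ioc, int_inv _ (aSeq_pos n) (aSeq_anti (Nat.sub_le n 1)),
      aSeq_ratio hn]

lemma part3 {μ : ℝ} (α t : ℝ) (hμ0 : 0 < μ) (hμ1 : μ < 1) {n : ℕ} (hn : 1 ≤ n)
    (hn' : Real.log (1 / μ) < n) (lam : ℂ)
    (hlam : lam = ((μ ^ (-(α + 2) / 2) : ℝ) : ℂ) * Complex.exp (Complex.I * (t : ℂ))) :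
    (∫ x in Set.Ioi (0:ℝ),
        ‖(μ : ℂ)⁻¹ * gSeq μ α t n (x / μ) - lam * gSeq μ α t n x‖ ^ 2
          * x ^ (-(α + 1)))
      = -2 * ‖lam‖ ^ 2 * μ ^ (-(α + 2)) * Real.log μ := by
  have ha : 0 < aSeq n := aSeq_pos n
  have hb : 0 < aSeq (n-1) := aSeq_pos (n-1)
  have hab : aSeq n ≤ aSeq (n-1) := aSeq_anti (Nat.sub_le n 1)
  have hkey : aSeq n < μ * aSeq (n-1) := aSeq_lt hμ0 hn hn'
  have hμa : μ * aSeq n < aSeq n := by nlinarith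
  have hμb : μ * aSeq (n-1) < aSeq (n-1) := by nlinarith
  have hc2 : ‖lam‖ ^ 2 = μ ^ (-(α+2)) := by
    rw [hlam, abs_lam hμ0, rpow_half_sq hμ0.le]
  have hpt : ∀ x ∈ Set.Ioi (0:ℝ),
      ‖(μ : ℂ)⁻¹ * gSeq μ α t n (x / μ) - lam * gSeq μ α t n x‖ ^ 2
          * x ^ (-(α + 1)) =
      (Set.Ico (μ * aSeq n) (aSeq n)).indicator
          (fun x => μ ^ (-(α+2)) * μ ^ (-(α+2)) * x⁻¹) x +
        (Set.Ioc (μ * aSeq (n-1)) (aSeq (n-1))).indicator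
          (fun x => μ ^ (-(α+2)) * μ ^ (-(α+2)) * x⁻¹) x := by
    intro x hx
    have hx0 : (0:ℝ) < x := hx
    have htrans : (x/μ ∈ Set.Icc (aSeq n) (aSeq (n-1))) ↔
        (μ * aSeq n ≤ x ∧ x ≤ μ * aSeq (n-1)) := by
      rw [Set.mem_Icc, le_div_iff₀ hμ0, div_le_iff₀ hμ0]
      constructor <;> (rintro ⟨h1, h2⟩; exact ⟨by linarith, by linarith⟩)
    by_cases hJ : μ * aSeq n ≤ x ∧ x ≤ μ * aSeq (n-1) <;>
      by_cases hI : x ∈ Set.Icc (aSeq n) (aSeq (n-1))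
    · -- both
      have e1 : gSeq μ α t n (x/μ) = gEig μ α t (x/μ) :=
        Set.indicator_of_mem (htrans.mpr hJ) _
      have e2 : gSeq μ α t n x = gEig μ α t x := Set.indicator_of_mem hI _
      rw [e1, e2, hlam, eig hμ0 hμ1 hx0,
        Set.indicator_of_notMem (fun h => absurd h.2 (not_lt.mpr hI.1)),
        Set.indicator_of_notMem (fun h => absurd h.1 (not_lt.mpr hJ.2))]
      simp
    · -- J only
      have hxb : x < aSeq n := by
        have hxb' : x ≤ aSeq (n-1) := le_of_lt (lt_of_le_of_lt hJ.2 hμb)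
        exact lt_of_not_ge fun h => hI ⟨h, hxb'⟩
      have e1 : gSeq μ α t n (x/μ) = gEig μ α t (x/μ) :=
        Set.indicator_of_mem (htrans.mpr hJ) _
      have e2 : gSeq μ α t n x = 0 := Set.indicator_of_notMem hI _
      rw [e1, e2, mul_zero, sub_zero, eig hμ0 hμ1 hx0, abs_lam_g_sq hμ0 hx0,
        Set.indicator_of_mem (Set.mem_Ico.mpr ⟨hJ.1, hxb⟩),
        Set.indicator_of_notMem (fun h => absurd h.1 (not_lt.mpr hJ.2))]
      simp
    · -- I only
      have hmax : μ * aSeq n ≤ x := le_of_lt (lt_of_lt_of_le hμa hI.1)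
      have hxb : μ * aSeq (n-1) < x := by
        by_contra h
        exact hJ ⟨hmax, not_lt.mp h⟩
      have e1 : gSeq μ α t n (x/μ) = 0 :=
        Set.indicator_of_notMem (fun h => hJ (htrans.mp h)) _
      have e2 : gSeq μ α t n x = gEig μ α t x := Set.indicator_of_mem hI _
      rw [e1, e2, mul_zero, zero_sub, hlam, norm_neg, abs_lam_g_sq hμ0 hx0,
        Set.indicator_of_notMem (fun h => absurd hI.1 (not_le.mpr h.2)),
        Set.indicator_of_mem (Set.mem_Ioc.mpr ⟨hxb, hI.2⟩)]
      simp
    · -- neither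
      have e1 : gSeq μ α t n (x/μ) = 0 :=
        Set.indicator_of_notMem (fun h => hJ (htrans.mp h)) _
      have e2 : gSeq μ α t n x = 0 := Set.indicator_of_notMem hI _
      rw [e1, e2, mul_zero, mul_zero, sub_zero,
        Set.indicator_of_notMem (fun h => hJ ⟨h.1, le_of_lt (lt_trans h.2 hkey)⟩),
        Set.indicator_of_notMem (fun h => hI ⟨le_of_lt (lt_trans hkey h.1), h.2⟩)]
      simp
  rw [setIntegral_congr_fun measurableSet_Ioi hpt]
  have hS1 : Set.Ico (μ * aSeq n) (aSeq n) ⊆ Set.Ioi (0:ℝ) :=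
    fun x hx => lt_of_lt_of_le (by positivity) hx.1
  have hS2 : Set.Ioc (μ * aSeq (n-1)) (aSeq (n-1)) ⊆ Set.Ioi (0:ℝ) :=
    fun x hx => lt_trans (by positivity) hx.1
  have hcont : ∀ p q : ℝ, 0 < p →
      IntegrableOn (fun x:ℝ => μ ^ (-(α+2)) * μ ^ (-(α+2)) * x⁻¹) (Set.Icc p q) := by
    intro p q hp
    apply ContinuousOn.integrableOn_Icc
    exact continuousOn_const.mul
      (continuousOn_id.inv₀ fun x hx => (lt_of_lt_of_le hp hx.1).ne')
  have hint1 : Integrable ((Set.Ico (μ * aSeq n) (aSeq n)).indicator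
      (fun x:ℝ => μ ^ (-(α+2)) * μ ^ (-(α+2)) * x⁻¹)) volume :=
    (integrable_indicator_iff measurableSet_Ico).mpr
      ((hcont _ _ (by positivity)).mono_set Set.Ico_subset_Icc_self)
  have hint2 : Integrable ((Set.Ioc (μ * aSeq (n-1)) (aSeq (n-1))).indicator
      (fun x:ℝ => μ ^ (-(α+2)) * μ ^ (-(α+2)) * x⁻¹)) volume :=
    (integrable_indicator_iff measurableSet_Ioc).mpr
      ((hcont _ _ (by positivity)).mono_set Set.Ioc_subset_Icc_self)
  rw [integral_add hint1.restrict hint2.restrict,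
      setIntegral_indicator measurableSet_Ico, Set.inter_eq_right.mpr hS1,
      setIntegral_indicator measurableSet_Ioc, Set.inter_eq_right.mpr hS2,
      ← integral_Icc_eq_integral_Ico, integral_Icc_eq_integral_Ioc,
      int_inv _ (by positivity) hμa.le, int_inv _ (by positivity) hμb.le]
  have hlog1 : Real.log (aSeq n / (μ * aSeq n)) = -Real.log μ := by
    rw [Real.log_div ha.ne' (by positivity), Real.log_mul hμ0.ne' ha.ne']
    ring
  have hlog2 : Real.log (aSeq (n-1) / (μ * aSeq (n-1))) = -Real.log μ := by
    rw [Real.log_div hb.ne' (by positivity), Real.log_mul hμ0.ne' hb.ne']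
    ring
  rw [hlog1, hlog2, hc2]
  ring

lemma inter_null {n m : ℕ} (h : n < m) :
    volume (Set.Icc (aSeq n) (aSeq (n-1)) ∩ Set.Icc (aSeq m) (aSeq (m-1))) = 0 := by
  have hsub : Set.Icc (aSeq n) (aSeq (n-1)) ∩ Set.Icc (aSeq m) (aSeq (m-1))
      ⊆ Set.Icc (aSeq n) (aSeq (m-1)) := fun x hx => ⟨hx.1.1, hx.2.2⟩
  have hle : aSeq (m-1) ≤ aSeq n := aSeq_anti (by omega)
  refine measure_mono_null hsub ?_
  rw [Real.volume_Icc]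
  exact ENNReal.ofReal_eq_zero.mpr (by linarith)

theorem stmt5 (μ α t : ℝ) (hμ : μ ∈ Set.Ioo (0:ℝ) 1) (hα : -1 ≤ α)
    (lam : ℂ) (hlam : lam = ((μ ^ (-(α + 2) / 2) : ℝ) : ℂ) * Complex.exp (Complex.I * (t : ℂ))) :
    (∀ n : ℕ, 1 ≤ n →
      (∫ x in Set.Ioi (0:ℝ), ‖gSeq μ α t n x‖ ^ 2 * x ^ (-(α + 1)))
        = μ ^ (-(α + 2)) * n) ∧
    (∀ n m : ℕ, 1 ≤ n → 1 ≤ m → n ≠ m →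
      (∫ x in Set.Ioi (0:ℝ),
        gSeq μ α t n x * (starRingEnd ℂ) (gSeq μ α t m x) * ((x ^ (-(α + 1)) : ℝ) : ℂ)) = 0) ∧
    (∀ n : ℕ, 1 ≤ n → Real.log (1 / μ) < n →
      (∫ x in Set.Ioi (0:ℝ),
        ‖(μ : ℂ)⁻¹ * gSeq μ α t n (x / μ) - lam * gSeq μ α t n x‖ ^ 2
          * x ^ (-(α + 1)))
        = -2 * ‖lam‖ ^ 2 * μ ^ (-(α + 2)) * Real.log μ) ∧
    Tendsto (fun n : ℕ =>
      Real.sqrt (∫ x in Set.Ioi (0:ℝ),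
        ‖(μ : ℂ)⁻¹ * gSeq μ α t n (x / μ) - lam * gSeq μ α t n x‖ ^ 2
          * x ^ (-(α + 1))) /
      Real.sqrt (∫ x in Set.Ioi (0:ℝ),
        ‖gSeq μ α t n x‖ ^ 2 * x ^ (-(α + 1))))
      atTop (nhds 0) := by
  obtain ⟨hμ0, hμ1⟩ := hμ
  refine ⟨fun n hn => part1 α t hμ0 hμ1 hn, ?_, fun n hn hn' => part3 α t hμ0 hμ1 hn hn' lam hlam, ?_⟩
  · intro n m hn hm hne
    have hnull : volume (Set.Icc (aSeq n) (aSeq (n-1)) ∩ Set.Icc (aSeq m) (aSeq (m-1))) = 0 := by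
      rcases hne.lt_or_gt with h | h
      · exact inter_null h
      · rw [Set.inter_comm]; exact inter_null h
    have hae : ∀ᵐ x ∂(volume : Measure ℝ),
        gSeq μ α t n x * (starRingEnd ℂ) (gSeq μ α t m x) * ((x ^ (-(α + 1)) : ℝ) : ℂ) = 0 := by
      rw [ae_iff]
      refine measure_mono_null (fun x hx => ?_) hnull
      simp only [Set.mem_setOf_eq] at hx
      by_contra hxs
      apply hx
      simp only [Set.mem_inter_iff, not_and_or] at hxs
      rcases hxs with h | h
      · unfold gSeq
        rw [Set.indicator_of_notMem h]
        simp
      · unfold gSeq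
        rw [Set.indicator_of_notMem h]
        simp
    calc (∫ x in Set.Ioi (0:ℝ),
          gSeq μ α t n x * (starRingEnd ℂ) (gSeq μ α t m x) * ((x ^ (-(α + 1)) : ℝ) : ℂ))
        = ∫ _x in Set.Ioi (0:ℝ), (0:ℂ) := integral_congr_ae (ae_restrict_of_ae hae)
      _ = 0 := by simp
  · have hten : Tendsto (fun n : ℕ =>
        Real.sqrt (-2 * ‖lam‖ ^ 2 * μ ^ (-(α + 2)) * Real.log μ) /
          Real.sqrt (μ ^ (-(α + 2)) * n)) atTop (nhds 0) := by
      apply Tendsto.div_atTop tendsto_const_nhds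
      have hs : Tendsto Real.sqrt atTop atTop :=
        tendsto_atTop_atTop_of_monotone (fun a b h => Real.sqrt_le_sqrt h)
          (fun b => ⟨b^2, by rw [Real.sqrt_sq_eq_abs]; exact le_abs_self b⟩)
      exact hs.comp (Tendsto.const_mul_atTop (by positivity) tendsto_natCast_atTop_atTop)
    apply hten.congr'
    filter_upwards [eventually_ge_atTop (max 1 (⌈Real.log (1/μ)⌉₊ + 1))] with n hn
    have hn1 : 1 ≤ n := le_trans (le_max_left _ _) hn
    have hn2 : Real.log (1/μ) < n := by
      have h1 : (⌈Real.log (1/μ)⌉₊ + 1 : ℕ) ≤ n := le_trans (le_max_right _ _) hn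
      have h2 : Real.log (1/μ) ≤ (⌈Real.log (1/μ)⌉₊ : ℝ) := Nat.le_ceil _
      have h3 : ((⌈Real.log (1/μ)⌉₊ + 1 : ℕ) : ℝ) ≤ n := Nat.cast_le.mpr h1
      push_cast at h3
      linarith
    rw [part1 α t hμ0 hμ1 hn1, part3 α t hμ0 hμ1 hn1 hn2 lam hlam]
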